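/- In the Hecke algebra H_l, the Murphy elements X_i = T_{i-1} ⋯ T_1 T_1 ⋯ T_{i-1} (with X_1 = 1) pairwise commute. -/
import Mathlib


noncomputable section

/-- The Murphy element `X_i = T_{i-1} ⋯ T_1 T_1 ⋯ T_{i-1}` (so `X_1 = 1`). -/
def murphyX {A : Type*} [Ring A] (T : ℕ → A) (i : ℕ) : A :=
  (((List.range (i - 1)).reverse.map fun k => T (k + 1)).prod) *
    (((List.range (i - 1)).map fun k => T (k + 1)).prod)

/-- Purely braid-theoretic core: if `a b a = b a b`, `x` commutes with `b`, and
`x` commutes with `a x a`, then `a x a` commutes with `b (a x a) b`. -/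
lemma murphy_conj_comm {A : Type*} [Ring A] (a b x : A)
    (hb : a * b * a = b * a * b) (hx : x * b = b * x)
    (hc : x * a * x * a = a * x * a * x) :
    (a * x * a) * (b * (a * x * a) * b) = (b * (a * x * a) * b) * (a * x * a) := by
  calc (a * x * a) * (b * (a * x * a) * b)
      = a * x * (a * b * a) * x * a * b := by simp only [mul_assoc]
    _ = a * x * (b * a * b) * x * a * b := by rw [hb]
    _ = a * (x * b) * a * b * x * a * b := by simp only [mul_assoc]
    _ = a * (b * x) * a * b * x * a * b := by rw [hx]
    _ = a * b * x * a * (b * x) * a * b := by simp only [mul_assoc]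
    _ = a * b * x * a * (x * b) * a * b := by rw [← hx]
    _ = a * b * x * a * x * (b * a * b) := by simp only [mul_assoc]
    _ = a * b * x * a * x * (a * b * a) := by rw [← hb]
    _ = a * b * (x * a * x * a) * b * a := by simp only [mul_assoc]
    _ = a * b * (a * x * a * x) * b * a := by rw [hc]
    _ = (a * b * a) * x * a * x * b * a := by simp only [mul_assoc]
    _ = (b * a * b) * x * a * x * b * a := by rw [hb]
    _ = b * a * b * x * a * (x * b) * a := by simp only [mul_assoc]
    _ = b * a * b * x * a * (b * x) * a := by rw [hx]
    _ = b * a * (b * x) * a * b * x * a := by simp only [mul_assoc]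
    _ = b * a * (x * b) * a * b * x * a := by rw [← hx]
    _ = b * a * x * (b * a * b) * x * a := by simp only [mul_assoc]
    _ = b * a * x * (a * b * a) * x * a := by rw [← hb]
    _ = (b * (a * x * a) * b) * (a * x * a) := by simp only [mul_assoc]

lemma murphyX_one {A : Type*} [Ring A] (T : ℕ → A) : murphyX T 1 = 1 := by
  simp [murphyX]

lemma murphyX_succ {A : Type*} [Ring A] (T : ℕ → A) (j : ℕ) (hj : 1 ≤ j) :
    murphyX T (j + 1) = T j * murphyX T j * T j := by
  obtain ⟨m, rfl⟩ : ∃ m, j = m + 1 := ⟨j - 1, (Nat.succ_pred_eq_of_pos hj).symm⟩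
  simp [murphyX, List.range_succ, mul_assoc]

/-- in the Hecke algebra `H_l`, the Murphy elements
`X_1, …, X_l` pairwise commute. -/
theorem murphy_elements_commute (l : ℕ) (A : Type*) [Ring A]
    [Algebra (RatFunc ℂ) A] (T : ℕ → A)
    (hquad : ∀ i, 1 ≤ i → i < l →
      (T i - algebraMap (RatFunc ℂ) A RatFunc.X) *
        (T i + algebraMap (RatFunc ℂ) A (RatFunc.X)⁻¹) = 0)
    (hbraid : ∀ i, 1 ≤ i → i + 1 < l →
      T i * T (i + 1) * T i = T (i + 1) * T i * T (i + 1))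
    (hcomm : ∀ i j, 1 ≤ i → i + 1 < j → j < l → T i * T j = T j * T i) :
    ∀ i j, 1 ≤ i → i ≤ l → 1 ≤ j → j ≤ l →
      murphyX T i * murphyX T j = murphyX T j * murphyX T i := by
  -- far commutation : `X_i` commutes with `T k` for `i < k < l`
  have hXT : ∀ i k, i < k → k < l → Commute (murphyX T i) (T k) := by
    intro i k hik hkl
    have h : ∀ m ∈ List.range (i - 1), Commute (T k) (T (m + 1)) := by
      intro m hm
      have hm' : m < i - 1 := List.mem_range.mp hm
      have h1 : (m + 1) + 1 < k := by omega
      exact (hcomm (m + 1) k (Nat.le_add_left 1 m) h1 hkl).symm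
    have h1 : ∀ x ∈ ((List.range (i - 1)).reverse.map fun m => T (m + 1)),
        Commute (T k) x := by
      intro x hx
      obtain ⟨m, hm, rfl⟩ := List.mem_map.mp hx
      exact h m (List.mem_reverse.mp hm)
    have h2 : ∀ x ∈ ((List.range (i - 1)).map fun m => T (m + 1)),
        Commute (T k) x := by
      intro x hx
      obtain ⟨m, hm, rfl⟩ := List.mem_map.mp hx
      exact h m hm
    exact ((Commute.list_prod_right _ _ h1).mul_right
      (Commute.list_prod_right _ _ h2)).symm
  -- the adjacent case : `X_i` commutes with `X_{i+1} = T_i X_i T_i`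
  have hadj : ∀ i, 1 ≤ i → i < l →
      murphyX T i * (T i * murphyX T i * T i)
        = (T i * murphyX T i * T i) * murphyX T i := by
    intro i hi
    induction i, hi using Nat.le_induction with
    | base =>
      intro _
      simp [murphyX_one]
    | succ i hi IH =>
      intro hil
      have hil' : i < l := by omega
      set x := murphyX T i with hx
      have hXsucc : murphyX T (i + 1) = T i * x * T i := murphyX_succ T i hi
      rw [hXsucc]
      have hb : T i * T (i + 1) * T i = T (i + 1) * T i * T (i + 1) :=
        hbraid i hi hil
      have hxb : x * T (i + 1) = T (i + 1) * x :=
        (hXT i (i + 1) (by omega) (by omega)).eq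
    -- hc from IH
      have hc : x * T i * x * T i = T i * x * T i * x := by
        have := IH hil'
        calc x * T i * x * T i = x * (T i * x * T i) := by simp only [mul_assoc]
          _ = (T i * x * T i) * x := this
          _ = T i * x * T i * x := by simp only [mul_assoc]
      exact murphy_conj_comm (T i) (T (i + 1)) x hb hxb hc
  -- main induction : for `i ≤ j ≤ l`, `X_i` commutes with `X_j`
  have main : ∀ i j, 1 ≤ i → i ≤ j → j ≤ l →
      murphyX T i * murphyX T j = murphyX T j * murphyX T i := by
    intro i j hi hij
    induction j, hij using Nat.le_induction with
    | base => intro _; rfl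
    | succ j hij IH =>
      intro hjl
      have hj1 : 1 ≤ j := le_trans hi hij
      rw [murphyX_succ T j hj1]
      rcases eq_or_lt_of_le hij with h | h
      · subst h
        exact hadj i hi (by omega)
      · have h1 : Commute (murphyX T i) (T j) := hXT i j h (by omega)
        have h2 : Commute (murphyX T i) (murphyX T j) := IH (by omega)
        exact ((h1.mul_right h2).mul_right h1).eq
  intro i j hi hil hj hjl
  rcases le_total i j with h | h
  · exact main i j hi h hjl
  · exact (main j i hj h hil).symm
end
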